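/- Let ν be a nonzero Lévy measure on ℝ^d and let (λ¹(dξ), ν¹_ξ(dr)) and (λ²(dξ), ν²_ξ(dr)) be two polar decompositions of ν. Then λ¹ and λ² are mutually absolutely continuous and there exists a measurable function c : S → (0,∞) such that λ²(dξ) = c(ξ) λ¹(dξ) and, for λ¹-almost every ξ ∈ S, ν²_ξ = c(ξ)^{-1} ν¹_ξ. -/

import Mathlib

open MeasureTheory Set
open scoped ENNReal

namespace PolarUniq


/-- dyadic partition of `(0,∞)` -/
noncomputable def Iv : ℕ → Set ℝ
  | 0 => Set.Ioi 1
  | (n+1) => Set.Ioc ((2:ℝ)^(-(n+1:ℤ))) ((2:ℝ)^(-(n:ℤ)))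

noncomputable def aa (n : ℕ) : ℝ≥0∞ := ENNReal.ofReal ((2:ℝ)^(-(2*n:ℤ)))

lemma aa_pos (n : ℕ) : 0 < aa n := by
  simp [aa, ENNReal.ofReal_pos]; positivity

lemma aa_ne_top (n : ℕ) : aa n ≠ ⊤ := ENNReal.ofReal_ne_top

lemma measIv (n : ℕ) : MeasurableSet (Iv n) := by
  cases n <;> simp [Iv] <;> exact measurableSet_Ioc

lemma Iv_subset_Ioi (n : ℕ) : Iv n ⊆ Set.Ioi ((2:ℝ)^(-(n:ℤ))) := by
  cases n with
  | zero => simp [Iv]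
  | succ n => exact fun r hr => hr.1

lemma Iv_subset_Ioi0 (n : ℕ) : Iv n ⊆ Set.Ioi (0:ℝ) := by
  refine (Iv_subset_Ioi n).trans ?_
  intro r hr
  exact lt_trans (by positivity : (0:ℝ) < (2:ℝ)^(-(n:ℤ))) hr

lemma Iv_subset_Iic (n : ℕ) : Iv (n+1) ⊆ Set.Iic ((2:ℝ)^(-(n:ℤ))) := fun r hr => hr.2

lemma Iv_disjoint : Pairwise (Function.onFun Disjoint Iv) := by
  have key : ∀ m n, m < n → Disjoint (Iv m) (Iv n) := by
    intro m n hmn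
    obtain ⟨k, rfl⟩ : ∃ k, n = k + 1 := ⟨n - 1, by omega⟩
    refine Set.disjoint_left.2 fun r hrm hrn => ?_
    have h1 : (2:ℝ)^(-(m:ℤ)) < r := Iv_subset_Ioi m hrm
    have h2 : r ≤ (2:ℝ)^(-(k:ℤ)) := Iv_subset_Iic k hrn
    have h3 : (2:ℝ)^(-(k:ℤ)) ≤ (2:ℝ)^(-(m:ℤ)) := by
      apply zpow_le_zpow_right₀ (by norm_num)
      omega
    linarith
  intro m n hmn
  rcases lt_or_gt_of_ne hmn with h | h
  · exact key m n h
  · exact (key n m h).symm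

lemma Iv_cover (N : ℕ) : ∀ r : ℝ, (2:ℝ)^(-(N:ℤ)) < r → r ∈ ⋃ n ∈ Finset.range (N+1), Iv n := by
  induction N with
  | zero =>
    intro r hr
    simp only [Set.mem_iUnion]
    refine ⟨0, by simp, ?_⟩
    simpa [Iv] using (by simpa using hr : (1:ℝ) < r)
  | succ N ih =>
    intro r hr
    by_cases h : (2:ℝ)^(-(N:ℤ)) < r
    · obtain h' := ih r h
      simp only [Set.mem_iUnion] at h' ⊢
      obtain ⟨n, hn, hmem⟩ := h'
      refine ⟨n, ?_, hmem⟩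
      simp only [Finset.mem_range] at hn ⊢; omega
    · push_neg at h
      simp only [Set.mem_iUnion]
      refine ⟨N+1, by simp, ?_⟩
      constructor
      · push_cast at hr; exact hr
      · exact h

lemma Iv_union : ⋃ n, Iv n = Set.Ioi (0:ℝ) := by
  apply Set.Subset.antisymm
  · exact Set.iUnion_subset Iv_subset_Ioi0
  · intro r hr
    obtain ⟨N, hN⟩ := exists_pow_lt_of_lt_one hr (by norm_num : (1:ℝ)/2 < 1)
    have : (2:ℝ)^(-(N:ℤ)) < r := by
      have : ((1:ℝ)/2)^N = (2:ℝ)^(-(N:ℤ)) := by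
        rw [zpow_neg, zpow_natCast, ← inv_pow]
        norm_num
      linarith [this ▸ hN]
    have := Iv_cover N r this
    simp only [Set.mem_iUnion] at this ⊢
    obtain ⟨n, _, h⟩ := this
    exact ⟨n, h⟩

lemma aa_le {n : ℕ} {r : ℝ} (hr : r ∈ Iv n) : aa n ≤ ENNReal.ofReal (min (r^2) 1) := by
  apply ENNReal.ofReal_le_ofReal
  cases n with
  | zero =>
    have : (1:ℝ) < r := hr
    have : (1:ℝ) ≤ r^2 := by nlinarith
    simp [min_eq_right this, aa]
  | succ n =>
    have h1 : (2:ℝ)^(-(n+1:ℤ)) < r := hr.1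
    have h2 : r ≤ (2:ℝ)^(-(n:ℤ)) := hr.2
    have hr0 : 0 < r := lt_trans (by positivity) h1
    have hle1 : r ≤ 1 := le_trans h2 (by
      apply zpow_le_one_of_nonpos₀ (by norm_num); omega)
    have hmin : min (r^2) 1 = r^2 := min_eq_left (by nlinarith)
    rw [hmin]
    have : (2:ℝ)^(-(2*(n+1):ℤ)) = ((2:ℝ)^(-(n+1:ℤ)))^2 := by
      rw [← zpow_natCast (((2:ℝ))^(-(n+1:ℤ))) 2, ← zpow_mul]; ring_nf
    push_cast at this ⊢
    rw [this]
    have hpos : (0:ℝ) < (2:ℝ)^(-(n+1:ℤ)) := by positivity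
    nlinarith



noncomputable def pSet (d : ℕ) (A : Set (Metric.sphere (0 : EuclideanSpace ℝ (Fin d)) 1))
    (B : Set ℝ) : Set (EuclideanSpace ℝ (Fin d)) :=
  {x | ‖x‖ ∈ B ∧ ‖x‖⁻¹ • x ∈ (Subtype.val '' A)}

variable {d : ℕ}

lemma measSet_pSet {A : Set (Metric.sphere (0 : EuclideanSpace ℝ (Fin d)) 1)} {B : Set ℝ}
    (hA : MeasurableSet A) (hB : MeasurableSet B) : MeasurableSet (pSet d A B) := by
  have h1 : MeasurableSet (Subtype.val '' A) :=
    (Metric.isClosed_sphere.measurableSet).subtype_image hA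
  have h2 : Measurable (fun x : EuclideanSpace ℝ (Fin d) => ‖x‖⁻¹ • x) :=
    (measurable_norm.inv).smul measurable_id
  exact (measurable_norm hB).inter (h2 h1)

lemma mem_pSet {A : Set (Metric.sphere (0 : EuclideanSpace ℝ (Fin d)) 1)} {B : Set ℝ}
    (ξ : Metric.sphere (0 : EuclideanSpace ℝ (Fin d)) 1) {r : ℝ} (hr : 0 < r) :
    (r • (ξ : EuclideanSpace ℝ (Fin d)) ∈ pSet d A B) ↔ (ξ ∈ A ∧ r ∈ B) := by
  have hξ : ‖(ξ : EuclideanSpace ℝ (Fin d))‖ = 1 := by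
    simpa [mem_sphere_zero_iff_norm] using ξ.2
  have hnorm : ‖r • (ξ : EuclideanSpace ℝ (Fin d))‖ = r := by
    rw [norm_smul, hξ, mul_one, Real.norm_eq_abs, abs_of_pos hr]
  simp only [pSet, Set.mem_setOf_eq, hnorm]
  rw [smul_smul, inv_mul_cancel₀ hr.ne', one_smul,
    Subtype.val_injective.mem_set_image]
  exact and_comm

lemma pSet_subset {A : Set (Metric.sphere (0 : EuclideanSpace ℝ (Fin d)) 1)} {B : Set ℝ}
    (hB : B ⊆ Set.Ioi 0) : pSet d A B ⊆ ({0}ᶜ : Set (EuclideanSpace ℝ (Fin d))) := by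
  intro x hx
  simp only [Set.mem_compl_iff, Set.mem_singleton_iff]
  intro h0
  have := hB hx.1
  rw [h0] at this
  simp at this

lemma pSet_univ {B : Set ℝ} (hB : B ⊆ Set.Ioi 0) :
    pSet d Set.univ B = (fun x : EuclideanSpace ℝ (Fin d) => ‖x‖) ⁻¹' B := by
  ext x
  simp only [pSet, Set.mem_setOf_eq, Set.mem_preimage]
  constructor
  · exact fun h => h.1
  · intro h
    refine ⟨h, ?_⟩
    have hx0 : x ≠ 0 := by
      intro h0
      have := hB h
      rw [h0] at this
      simp at this
    have hmem : ‖x‖⁻¹ • x ∈ Metric.sphere (0 : EuclideanSpace ℝ (Fin d)) 1 := by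
      simp only [mem_sphere_zero_iff_norm, norm_smul, norm_inv, norm_norm]
      exact inv_mul_cancel₀ (norm_ne_zero_iff.2 hx0)
    exact ⟨⟨_, hmem⟩, Set.mem_univ _, rfl⟩

lemma key (ν : Measure (EuclideanSpace ℝ (Fin d)))
    (lam : Measure (Metric.sphere (0 : EuclideanSpace ℝ (Fin d)) 1))
    (νk : Metric.sphere (0 : EuclideanSpace ℝ (Fin d)) 1 → Measure ℝ)
    (hdec : ∀ B : Set (EuclideanSpace ℝ (Fin d)), MeasurableSet B → B ⊆ {0}ᶜ →
      ν B = ∫⁻ ξ, ∫⁻ r in Set.Ioi (0 : ℝ),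
        B.indicator (fun _ => (1 : ℝ≥0∞)) (r • (ξ : EuclideanSpace ℝ (Fin d)))
          ∂(νk ξ) ∂lam)
    {A : Set (Metric.sphere (0 : EuclideanSpace ℝ (Fin d)) 1)} {B : Set ℝ}
    (hA : MeasurableSet A) (hB : MeasurableSet B) (hB0 : B ⊆ Set.Ioi 0) :
    ν (pSet d A B) = ∫⁻ ξ in A, νk ξ B ∂lam := by
  rw [hdec _ (measSet_pSet hA hB) (pSet_subset hB0), ← lintegral_indicator hA]
  apply lintegral_congr
  intro ξ
  by_cases hξ : ξ ∈ A
  · have heq : ∀ r ∈ Set.Ioi (0:ℝ),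
        (pSet d A B).indicator (fun _ => (1:ℝ≥0∞)) (r • (ξ : EuclideanSpace ℝ (Fin d)))
          = B.indicator (fun _ => (1:ℝ≥0∞)) r := by
      intro r hr
      by_cases hrB : r ∈ B
      · rw [Set.indicator_of_mem ((mem_pSet ξ hr).2 ⟨hξ, hrB⟩), Set.indicator_of_mem hrB]
      · rw [Set.indicator_of_notMem, Set.indicator_of_notMem hrB]
        exact fun hmem => hrB ((mem_pSet ξ hr).1 hmem).2
    rw [setLIntegral_congr_fun measurableSet_Ioi heq]
    rw [lintegral_indicator hB, setLIntegral_one, Measure.restrict_apply hB,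
      Set.inter_eq_self_of_subset_left hB0, Set.indicator_of_mem hξ]
  · have heq : ∀ r ∈ Set.Ioi (0:ℝ),
        (pSet d A B).indicator (fun _ => (1:ℝ≥0∞)) (r • (ξ : EuclideanSpace ℝ (Fin d)))
          = (fun _ => (0:ℝ≥0∞)) r := by
      intro r hr
      rw [Set.indicator_of_notMem]
      exact fun hmem => hξ ((mem_pSet ξ hr).1 hmem).1
    rw [setLIntegral_congr_fun measurableSet_Ioi heq, lintegral_zero,
      Set.indicator_of_notMem hξ]



lemma Ioi_zero_eq_iUnion : Set.Ioi (0:ℝ) = ⋃ n : ℕ, Set.Ioi ((1/(n+1) : ℚ) : ℝ) := by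
  ext x
  simp only [Set.mem_Ioi, Set.mem_iUnion]
  constructor
  · intro hx
    obtain ⟨n, hn⟩ := exists_nat_one_div_lt hx
    refine ⟨n, ?_⟩
    push_cast
    exact hn
  · rintro ⟨n, hn⟩
    refine lt_trans ?_ hn
    positivity

lemma extR (μ μ' : Measure ℝ)
    (hμ : μ (Set.Ioi (0:ℝ))ᶜ = 0) (hμ' : μ' (Set.Ioi (0:ℝ))ᶜ = 0)
    (hfin : ∀ q : ℚ, 0 < q → μ (Set.Ioi (q:ℝ)) < ⊤)
    (heq : ∀ q : ℚ, 0 < q → μ (Set.Ioi (q:ℝ)) = μ' (Set.Ioi (q:ℝ))) : μ = μ' := by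
  have hres : ∀ q : ℚ, 0 < q →
      μ.restrict (Set.Ioi (q:ℝ)) = μ'.restrict (Set.Ioi (q:ℝ)) := by
    intro q hq
    have hfm : IsFiniteMeasure (μ.restrict (Set.Ioi (q:ℝ))) := by
      constructor
      rw [Measure.restrict_apply_univ]
      exact hfin q hq
    have hfm' : IsFiniteMeasure (μ'.restrict (Set.Ioi (q:ℝ))) := by
      constructor
      rw [Measure.restrict_apply_univ]
      rw [← heq q hq]
      exact hfin q hq
    refine ext_of_generate_finite (⋃ a : ℚ, {Set.Ioi (a : ℝ)})
      (BorelSpace.measurable_eq.trans Real.borel_eq_generateFrom_Ioi_rat)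
      Real.isPiSystem_Ioi_rat ?_ ?_
    · rintro s hs
      simp only [Set.mem_iUnion, Set.mem_singleton_iff] at hs
      obtain ⟨a, rfl⟩ := hs
      rw [Measure.restrict_apply measurableSet_Ioi, Measure.restrict_apply measurableSet_Ioi,
        Set.Ioi_inter_Ioi]
      have hcast : ((a ⊔ q : ℚ) : ℝ) = (a : ℝ) ⊔ (q : ℝ) := by push_cast; rfl
      rw [← hcast]
      exact heq _ (lt_sup_iff.2 (Or.inr hq))
    · rw [Measure.restrict_apply_univ, Measure.restrict_apply_univ]
      exact heq q hq
  ext B hB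
  have step : ∀ (m : Measure ℝ), m (Set.Ioi (0:ℝ))ᶜ = 0 →
      m B = ⨆ n : ℕ, m (B ∩ Set.Ioi ((1/(n+1) : ℚ) : ℝ)) := by
    intro m hm
    have h1 : m B = m (B ∩ Set.Ioi (0:ℝ)) := by
      have h2 : m (B \ Set.Ioi (0:ℝ)) = 0 :=
        measure_mono_null (Set.diff_subset_compl B (Set.Ioi 0)) hm
      have := measure_inter_add_diff (μ := m) (s := B) (t := Set.Ioi (0:ℝ)) measurableSet_Ioi
      rw [h2, add_zero] at this
      exact this.symm
    rw [h1]
    have h3 : B ∩ Set.Ioi (0:ℝ) = ⋃ n : ℕ, B ∩ Set.Ioi ((1/(n+1) : ℚ) : ℝ) := by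
      rw [← Set.inter_iUnion, ← Ioi_zero_eq_iUnion]
    rw [h3]
    apply Directed.measure_iUnion
    apply Monotone.directed_le
    intro i j hij
    apply Set.inter_subset_inter_right
    apply Set.Ioi_subset_Ioi
    have h4 : (1/(j+1) : ℚ) ≤ (1/(i+1) : ℚ) := by
      apply one_div_le_one_div_of_le (by positivity)
      have : (i:ℚ) ≤ j := by exact_mod_cast hij
      linarith
    exact_mod_cast h4
  rw [step μ hμ, step μ' hμ']
  apply iSup_congr
  intro n
  have hq : (0:ℚ) < 1/(n+1) := by positivity
  rw [← Measure.restrict_apply hB, ← Measure.restrict_apply hB, hres _ hq]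



lemma exists_zpow_lt {q : ℝ} (hq : 0 < q) : ∃ N : ℕ, (2:ℝ)^(-(N:ℤ)) < q := by
  obtain ⟨N, hN⟩ := exists_pow_lt_of_lt_one hq (by norm_num : (1:ℝ)/2 < 1)
  refine ⟨N, ?_⟩
  have : ((1:ℝ)/2)^N = (2:ℝ)^(-(N:ℤ)) := by
    rw [zpow_neg, zpow_natCast, ← inv_pow]
    norm_num
  linarith [this ▸ hN]

lemma fin_of_tsum {μ : Measure ℝ} (h : (∑' n, aa n * μ (Iv n)) < ⊤) {q : ℝ} (hq : 0 < q) :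
    μ (Set.Ioi q) < ⊤ := by
  obtain ⟨N, hN⟩ := exists_zpow_lt hq
  have hsub : Set.Ioi q ⊆ ⋃ n ∈ Finset.range (N+1), Iv n :=
    fun r hr => Iv_cover N r (lt_trans hN hr)
  refine lt_of_le_of_lt (measure_mono hsub) (lt_of_le_of_lt (measure_biUnion_finset_le _ _) ?_)
  refine ENNReal.sum_lt_top.2 (fun n _ => ?_)
  by_contra htop
  rw [not_lt, top_le_iff] at htop
  have hle : aa n * μ (Iv n) ≤ ∑' m, aa m * μ (Iv m) := ENNReal.le_tsum n
  rw [htop, ENNReal.mul_top (aa_pos n).ne'] at hle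
  exact h.ne (top_le_iff.1 hle)

lemma tsum_pos_of {μ : Measure ℝ} (h : 0 < μ (Set.Ioi 0)) :
    0 < ∑' n, aa n * μ (Iv n) := by
  rw [pos_iff_ne_zero]
  intro h0
  have hall : ∀ n, μ (Iv n) = 0 := by
    intro n
    have hle : aa n * μ (Iv n) ≤ ∑' m, aa m * μ (Iv m) := ENNReal.le_tsum n
    rw [h0, le_zero_iff] at hle
    rcases mul_eq_zero.1 hle with h' | h'
    · exact absurd h' (aa_pos n).ne'
    · exact h'
  have : μ (Set.Ioi (0:ℝ)) = 0 := by
    rw [← Iv_union]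
    exact measure_iUnion_null hall
  exact absurd this h.ne'

end PolarUniq

open PolarUniq

/-- Uniqueness of the polar decomposition of a nonzero Lévy measure, up to
multiplication by a measurable function `c(ξ) ∈ (0,∞)`. -/
theorem stmt_1 (d : ℕ) (hd : 1 ≤ d)
    (ν : Measure (EuclideanSpace ℝ (Fin d)))
    (hν0 : ν {0} = 0)
    (hνfin : ∫⁻ x, ENNReal.ofReal (min (‖x‖ ^ 2) 1) ∂ν < ⊤)
    (hνne : ν ≠ 0)
    (lam1 lam2 : Measure (Metric.sphere (0 : EuclideanSpace ℝ (Fin d)) 1))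
    (ν1 ν2 : Metric.sphere (0 : EuclideanSpace ℝ (Fin d)) 1 → Measure ℝ)
    (h1pos : 0 < lam1 Set.univ) (h2pos : 0 < lam2 Set.univ)
    (h1supp : ∀ ξ, ν1 ξ (Set.Ioi (0 : ℝ))ᶜ = 0)
    (h2supp : ∀ ξ, ν2 ξ (Set.Ioi (0 : ℝ))ᶜ = 0)
    (h1meas : ∀ B : Set ℝ, MeasurableSet B → Measurable fun ξ => ν1 ξ B)
    (h2meas : ∀ B : Set ℝ, MeasurableSet B → Measurable fun ξ => ν2 ξ B)
    (h1ne : ∀ ξ, 0 < ν1 ξ (Set.Ioi (0 : ℝ)))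
    (h2ne : ∀ ξ, 0 < ν2 ξ (Set.Ioi (0 : ℝ)))
    (h1dec : ∀ B : Set (EuclideanSpace ℝ (Fin d)), MeasurableSet B → B ⊆ {0}ᶜ →
      ν B = ∫⁻ ξ, ∫⁻ r in Set.Ioi (0 : ℝ),
        B.indicator (fun _ => (1 : ℝ≥0∞)) (r • (ξ : EuclideanSpace ℝ (Fin d)))
          ∂(ν1 ξ) ∂lam1)
    (h2dec : ∀ B : Set (EuclideanSpace ℝ (Fin d)), MeasurableSet B → B ⊆ {0}ᶜ →
      ν B = ∫⁻ ξ, ∫⁻ r in Set.Ioi (0 : ℝ),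
        B.indicator (fun _ => (1 : ℝ≥0∞)) (r • (ξ : EuclideanSpace ℝ (Fin d)))
          ∂(ν2 ξ) ∂lam2) :
    lam1 ≪ lam2 ∧ lam2 ≪ lam1 ∧
    ∃ c : Metric.sphere (0 : EuclideanSpace ℝ (Fin d)) 1 → ℝ,
      Measurable c ∧ (∀ ξ, 0 < c ξ) ∧
      lam2 = lam1.withDensity (fun ξ => ENNReal.ofReal (c ξ)) ∧
      (∀ᵐ ξ ∂lam1, ν2 ξ = (ENNReal.ofReal (c ξ))⁻¹ • ν1 ξ) := by
  classical
  have key1 : ∀ {A : Set (Metric.sphere (0 : EuclideanSpace ℝ (Fin d)) 1)} {B : Set ℝ},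
      MeasurableSet A → MeasurableSet B → B ⊆ Set.Ioi 0 →
      ν (pSet d A B) = ∫⁻ ξ in A, ν1 ξ B ∂lam1 :=
    fun hA hB hB0 => key ν lam1 ν1 h1dec hA hB hB0
  have key2 : ∀ {A : Set (Metric.sphere (0 : EuclideanSpace ℝ (Fin d)) 1)} {B : Set ℝ},
      MeasurableSet A → MeasurableSet B → B ⊆ Set.Ioi 0 →
      ν (pSet d A B) = ∫⁻ ξ in A, ν2 ξ B ∂lam2 :=
    fun hA hB hB0 => key ν lam2 ν2 h2dec hA hB hB0
  set f1 : Metric.sphere (0 : EuclideanSpace ℝ (Fin d)) 1 → ℝ≥0∞ :=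
    fun ξ => ∑' n, aa n * ν1 ξ (Iv n) with hf1def
  set f2 : Metric.sphere (0 : EuclideanSpace ℝ (Fin d)) 1 → ℝ≥0∞ :=
    fun ξ => ∑' n, aa n * ν2 ξ (Iv n) with hf2def
  have hf1m : Measurable f1 :=
    Measurable.ennreal_tsum fun n => (h1meas _ (measIv n)).const_mul _
  have hf2m : Measurable f2 :=
    Measurable.ennreal_tsum fun n => (h2meas _ (measIv n)).const_mul _
  have hf1pos : ∀ ξ, 0 < f1 ξ := fun ξ => tsum_pos_of (h1ne ξ)
  have hf2pos : ∀ ξ, 0 < f2 ξ := fun ξ => tsum_pos_of (h2ne ξ)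
  have marg1 : ∀ A, MeasurableSet A →
      ∫⁻ ξ in A, f1 ξ ∂lam1 = ∑' n, aa n * ν (pSet d A (Iv n)) := by
    intro A hA
    rw [show (∫⁻ ξ in A, f1 ξ ∂lam1) = ∫⁻ ξ in A, ∑' n, aa n * ν1 ξ (Iv n) ∂lam1 from rfl,
      lintegral_tsum fun n => ((h1meas _ (measIv n)).const_mul _).aemeasurable]
    exact tsum_congr fun n => by
      rw [lintegral_const_mul' _ _ (aa_ne_top n), key1 hA (measIv n) (Iv_subset_Ioi0 n)]
  have marg2 : ∀ A, MeasurableSet A →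
      ∫⁻ ξ in A, f2 ξ ∂lam2 = ∑' n, aa n * ν (pSet d A (Iv n)) := by
    intro A hA
    rw [show (∫⁻ ξ in A, f2 ξ ∂lam2) = ∫⁻ ξ in A, ∑' n, aa n * ν2 ξ (Iv n) ∂lam2 from rfl,
      lintegral_tsum fun n => ((h2meas _ (measIv n)).const_mul _).aemeasurable]
    exact tsum_congr fun n => by
      rw [lintegral_const_mul' _ _ (aa_ne_top n), key2 hA (measIv n) (Iv_subset_Ioi0 n)]
  have marg : ∀ A, MeasurableSet A →
      ∫⁻ ξ in A, f1 ξ ∂lam1 = ∫⁻ ξ in A, f2 ξ ∂lam2 :=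
    fun A hA => by rw [marg1 A hA, marg2 A hA]
  -- total finiteness
  have htot : ∑' n, aa n * ν (pSet d Set.univ (Iv n)) < ⊤ := by
    have hCn : ∀ n, pSet d Set.univ (Iv n) =
        (fun x : EuclideanSpace ℝ (Fin d) => ‖x‖) ⁻¹' (Iv n) :=
      fun n => pSet_univ (Iv_subset_Ioi0 n)
    have hmeasC : ∀ n, MeasurableSet (pSet d Set.univ (Iv n)) :=
      fun n => measSet_pSet MeasurableSet.univ (measIv n)
    have hb : ∀ n, aa n * ν (pSet d Set.univ (Iv n)) ≤
        ∫⁻ x in pSet d Set.univ (Iv n), ENNReal.ofReal (min (‖x‖^2) 1) ∂ν := by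
      intro n
      rw [← setLIntegral_const]
      refine setLIntegral_mono' (hmeasC n) (fun x hx => ?_)
      have hxn : ‖x‖ ∈ Iv n := by rw [hCn n] at hx; exact hx
      exact aa_le hxn
    have hdisj : Pairwise (Function.onFun Disjoint (fun n => pSet d Set.univ (Iv n))) := by
      intro m n hmn
      have := Iv_disjoint hmn
      rw [Function.onFun, hCn m, hCn n]
      exact Disjoint.preimage _ this
    calc ∑' n, aa n * ν (pSet d Set.univ (Iv n))
        ≤ ∑' n, ∫⁻ x in pSet d Set.univ (Iv n), ENNReal.ofReal (min (‖x‖^2) 1) ∂ν :=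
          ENNReal.tsum_le_tsum hb
      _ = ∫⁻ x in ⋃ n, pSet d Set.univ (Iv n), ENNReal.ofReal (min (‖x‖^2) 1) ∂ν :=
          (lintegral_iUnion hmeasC hdisj _).symm
      _ ≤ ∫⁻ x, ENNReal.ofReal (min (‖x‖^2) 1) ∂ν :=
          lintegral_mono' Measure.restrict_le_self (le_refl _)
      _ < ⊤ := hνfin
  have hf1fin : ∫⁻ ξ, f1 ξ ∂lam1 < ⊤ := by
    have h := marg1 Set.univ MeasurableSet.univ
    rw [Measure.restrict_univ] at h
    rw [h]; exact htot
  have hf2fin : ∫⁻ ξ, f2 ξ ∂lam2 < ⊤ := by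
    have h := marg2 Set.univ MeasurableSet.univ
    rw [Measure.restrict_univ] at h
    rw [h]; exact htot
  -- absolute continuity
  have hACgen : ∀ (la lb : Measure (Metric.sphere (0 : EuclideanSpace ℝ (Fin d)) 1))
      (fa fb : Metric.sphere (0 : EuclideanSpace ℝ (Fin d)) 1 → ℝ≥0∞),
      Measurable fa → (∀ ξ, 0 < fa ξ) →
      (∀ A, MeasurableSet A → ∫⁻ ξ in A, fa ξ ∂la = ∫⁻ ξ in A, fb ξ ∂lb) → la ≪ lb := by
    intro la lb fa fb hm hpos hmarg
    refine Measure.AbsolutelyContinuous.mk (fun A hA hA0 => ?_)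
    have h1 : ∫⁻ ξ in A, fa ξ ∂la = 0 := by
      rw [hmarg A hA, Measure.restrict_eq_zero.2 hA0, lintegral_zero_measure]
    have h3 := (setLIntegral_eq_zero_iff hA hm).1 h1
    have h5 : la {x | ¬ (x ∈ A → fa x = 0)} = 0 := ae_iff.1 h3
    have h4 : {x | ¬ (x ∈ A → fa x = 0)} = A := by
      ext x
      simp only [Set.mem_setOf_eq, _root_.not_imp]
      exact ⟨fun h => h.1, fun h => ⟨h, (hpos x).ne'⟩⟩
    rwa [h4] at h5
  have hac12 : lam1 ≪ lam2 := hACgen lam1 lam2 f1 f2 hf1m hf1pos marg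
  have hac21 : lam2 ≪ lam1 := hACgen lam2 lam1 f2 f1 hf2m hf2pos
    (fun A hA => (marg A hA).symm)
  -- sigma-finiteness of lam1
  haveI hsf : SigmaFinite lam1 := by
    apply Measure.sigmaFinite_of_countable
      (S := Set.range (fun n : ℕ => {ξ | ((n : ℝ≥0∞) + 1)⁻¹ ≤ f1 ξ}))
    · exact Set.countable_range _
    · rintro s ⟨n, rfl⟩
      by_contra htop
      rw [not_lt, top_le_iff] at htop
      have hle := mul_meas_ge_le_lintegral (μ := lam1) hf1m (((n : ℝ≥0∞)) + 1)⁻¹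
      rw [htop, ENNReal.mul_top (by simp : ((n : ℝ≥0∞) + 1)⁻¹ ≠ 0)] at hle
      exact hf1fin.ne (top_le_iff.1 hle)
    · apply Set.eq_univ_of_forall
      intro ξ
      obtain ⟨n, hn⟩ := ENNReal.exists_inv_nat_lt (hf1pos ξ).ne'
      refine Set.mem_sUnion.2 ⟨_, ⟨n, rfl⟩, ?_⟩
      have h6 : ((n : ℝ≥0∞) + 1)⁻¹ ≤ ((n : ℝ≥0∞))⁻¹ :=
        ENNReal.inv_le_inv' (le_self_add)
      exact le_trans h6 hn.le
  -- a.e. finiteness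
  have hf1lt : ∀ᵐ ξ ∂lam1, f1 ξ < ⊤ := ae_lt_top hf1m hf1fin.ne
  have hf2lt : ∀ᵐ ξ ∂lam2, f2 ξ < ⊤ := ae_lt_top hf2m hf2fin.ne
  have hf2lt1 : ∀ᵐ ξ ∂lam1, f2 ξ < ⊤ := hac12.ae_le hf2lt
  -- the density
  set c : Metric.sphere (0 : EuclideanSpace ℝ (Fin d)) 1 → ℝ :=
    fun ξ => if f1 ξ < ⊤ ∧ f2 ξ < ⊤ then (f1 ξ * (f2 ξ)⁻¹).toReal else 1 with hcdef
  have hsetm : MeasurableSet {ξ | f1 ξ < ⊤ ∧ f2 ξ < ⊤} := by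
    have : {ξ | f1 ξ < ⊤ ∧ f2 ξ < ⊤} = {ξ | f1 ξ < ⊤} ∩ {ξ | f2 ξ < ⊤} := rfl
    rw [this]
    exact (measurableSet_lt hf1m measurable_const).inter
      (measurableSet_lt hf2m measurable_const)
  have hcm : Measurable c :=
    Measurable.ite hsetm (hf1m.mul hf2m.inv).ennreal_toReal measurable_const
  have hcpos : ∀ ξ, 0 < c ξ := by
    intro ξ
    by_cases h : f1 ξ < ⊤ ∧ f2 ξ < ⊤
    · have : c ξ = (f1 ξ * (f2 ξ)⁻¹).toReal := by rw [hcdef]; exact if_pos h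
      rw [this]
      apply ENNReal.toReal_pos
      · exact (ENNReal.mul_pos (hf1pos ξ).ne' (ENNReal.inv_ne_zero.2 h.2.ne)).ne'
      · exact (ENNReal.mul_lt_top h.1 (ENNReal.inv_lt_top.2 (hf2pos ξ))).ne
    · have : c ξ = 1 := by rw [hcdef]; exact if_neg h
      rw [this]; norm_num
  have hofc : ∀ ξ, ENNReal.ofReal (c ξ) ≠ 0 ∧ ENNReal.ofReal (c ξ) ≠ ⊤ :=
    fun ξ => ⟨(ENNReal.ofReal_pos.2 (hcpos ξ)).ne', ENNReal.ofReal_ne_top⟩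
  have hgae : (fun ξ => ENNReal.ofReal (c ξ)) =ᵐ[lam1] (fun ξ => f1 ξ * (f2 ξ)⁻¹) := by
    filter_upwards [hf1lt, hf2lt1] with ξ h1 h2
    have hne : f1 ξ * (f2 ξ)⁻¹ ≠ ⊤ :=
      (ENNReal.mul_lt_top h1 (ENNReal.inv_lt_top.2 (hf2pos ξ))).ne
    have hcv : c ξ = (f1 ξ * (f2 ξ)⁻¹).toReal := by rw [hcdef]; exact if_pos ⟨h1, h2⟩
    rw [hcv]
    exact ENNReal.ofReal_toReal hne
  have hWD : lam1.withDensity f1 = lam2.withDensity f2 := by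
    ext A hA
    rw [withDensity_apply _ hA, withDensity_apply _ hA, marg A hA]
  have hlam2 : lam2 = lam1.withDensity (fun ξ => ENNReal.ofReal (c ξ)) := by
    have h22 : lam2.withDensity (fun ξ => f2 ξ * (f2 ξ)⁻¹) = lam2 := by
      have he : (fun ξ => f2 ξ * (f2 ξ)⁻¹) =ᵐ[lam2] (fun _ => 1) :=
        hf2lt.mono fun ξ h => ENNReal.mul_inv_cancel (hf2pos ξ).ne' h.ne
      rw [withDensity_congr_ae he]
      exact withDensity_one
    have hstep : lam2 = lam1.withDensity (fun ξ => f1 ξ * (f2 ξ)⁻¹) := by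
      calc lam2 = lam2.withDensity (fun ξ => f2 ξ * (f2 ξ)⁻¹) := h22.symm
        _ = (lam2.withDensity f2).withDensity (fun ξ => (f2 ξ)⁻¹) :=
            withDensity_mul lam2 hf2m hf2m.inv
        _ = (lam1.withDensity f1).withDensity (fun ξ => (f2 ξ)⁻¹) := by rw [hWD]
        _ = lam1.withDensity (fun ξ => f1 ξ * (f2 ξ)⁻¹) :=
            (withDensity_mul lam1 hf1m hf2m.inv).symm
    rw [hstep]
    exact (withDensity_congr_ae hgae).symm
  -- a.e. identity on rational rays
  have keyq : ∀ q : ℚ, 0 < q → ∀ᵐ ξ ∂lam1,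
      ν1 ξ (Set.Ioi (q:ℝ)) = ENNReal.ofReal (c ξ) * ν2 ξ (Set.Ioi (q:ℝ)) := by
    intro q hq
    have hq' : (0:ℝ) < q := by exact_mod_cast hq
    have hsub : Set.Ioi (q:ℝ) ⊆ Set.Ioi 0 := Set.Ioi_subset_Ioi hq'.le
    refine ae_eq_of_forall_setLIntegral_eq_of_sigmaFinite (h1meas _ measurableSet_Ioi)
      ((hcm.ennreal_ofReal).mul (h2meas _ measurableSet_Ioi)) (fun s hs _ => ?_)
    rw [← key1 hs measurableSet_Ioi hsub, key2 hs measurableSet_Ioi hsub, hlam2,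
      setLIntegral_withDensity_eq_setLIntegral_mul lam1 hcm.ennreal_ofReal
        (h2meas _ measurableSet_Ioi) hs]
    rfl
  have hfinq : ∀ᵐ ξ ∂lam1, ∀ q : ℚ, 0 < q → ν1 ξ (Set.Ioi (q:ℝ)) < ⊤ := by
    filter_upwards [hf1lt] with ξ h
    intro q hq
    exact fin_of_tsum h (by exact_mod_cast hq)
  refine ⟨hac12, hac21, c, hcm, hcpos, hlam2, ?_⟩
  have hallq : ∀ᵐ ξ ∂lam1, ∀ q : ℚ, 0 < q →
      ν1 ξ (Set.Ioi (q:ℝ)) = ENNReal.ofReal (c ξ) * ν2 ξ (Set.Ioi (q:ℝ)) := by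
    rw [MeasureTheory.ae_all_iff]
    intro q
    by_cases hq : 0 < q
    · filter_upwards [keyq q hq] with ξ h _
      exact h
    · filter_upwards with ξ h
      exact absurd h hq
  filter_upwards [hallq, hfinq] with ξ hq hfin
  have hext : ν1 ξ = ENNReal.ofReal (c ξ) • ν2 ξ := by
    apply extR
    · exact h1supp ξ
    · rw [Measure.smul_apply, h2supp ξ, smul_zero]
    · exact hfin
    · intro q hq'
      rw [Measure.smul_apply, smul_eq_mul]
      exact hq q hq'
  rw [hext, smul_smul, ENNReal.inv_mul_cancel (hofc ξ).1 (hofc ξ).2, one_smul]
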